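/- Let G be a locally Roelcke precompact Polish group and N a closed normal subgroup of G. Then the quotient group G/N, with the quotient topology (under which it is a Polish group), is locally Roelcke precompact. -/

import Mathlib

open scoped Pointwise

/-- A subset `A` of a topological group `G` is *Roelcke precompact* if for every
neighborhood `V` of the identity there is a finite set `F ⊆ G` with `A ⊆ V * F * V`,
where `V * F * V = {v * f * w : v, w ∈ V, f ∈ F}`. -/
def RoelckePrecompact {G : Type*} [Group G] [TopologicalSpace G] (A : Set G) : Prop :=
  ∀ V ∈ nhds (1 : G), ∃ F : Finset G, A ⊆ V * (F : Set G) * V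

/-- A topological group is *locally Roelcke precompact* if some open neighborhood
of the identity is Roelcke precompact. -/
def LocallyRoelckePrecompact (G : Type*) [Group G] [TopologicalSpace G] : Prop :=
  ∃ U : Set G, IsOpen U ∧ (1 : G) ∈ U ∧ RoelckePrecompact U

/-- The quotient of a locally Roelcke precompact Polish group by a closed normal subgroup
(a Polish group in the quotient topology) is locally Roelcke precompact. -/
theorem locallyRoelckePrecompact_quotient
    (G : Type*) [Group G] [TopologicalSpace G] [IsTopologicalGroup G] [PolishSpace G]
    (N : Subgroup G) [N.Normal] (hN : IsClosed (N : Set G))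
    (hG : LocallyRoelckePrecompact G) :
    LocallyRoelckePrecompact (G ⧸ N) := by
  obtain ⟨U, hUo, hU1, hURP⟩ := hG
  refine ⟨(QuotientGroup.mk : G → G ⧸ N) '' U, QuotientGroup.isOpenMap_coe U hUo,
    ⟨1, hU1, rfl⟩, ?_⟩
  intro V hV
  have hpre : (QuotientGroup.mk : G → G ⧸ N) ⁻¹' V ∈ nhds (1 : G) := by
    have : QuotientGroup.mk (1 : G) = (1 : G ⧸ N) := rfl
    exact QuotientGroup.continuous_mk.continuousAt.preimage_mem_nhds (this ▸ hV)
  obtain ⟨F, hF⟩ := hURP _ hpre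
  classical
  refine ⟨F.image (QuotientGroup.mk : G → G ⧸ N), ?_⟩
  rintro x ⟨u, hu, rfl⟩
  obtain ⟨vf, hvf, w, hw, rfl⟩ := hF hu
  obtain ⟨v, hv, f, hf, rfl⟩ := hvf
  exact ⟨QuotientGroup.mk v * QuotientGroup.mk f,
    ⟨QuotientGroup.mk v, hv, QuotientGroup.mk f, Finset.mem_coe.2 (Finset.mem_image_of_mem _ hf), rfl⟩,
    QuotientGroup.mk w, hw, rfl⟩
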